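/- For h > 0 and q1, q2 > 0 with Q := 1/q1 + 1/q2 > h, the integral over ℝ² of ρ(t,s)^h · 1{ρ(t,s) > δ} dt ds is finite for any δ > 0, where ρ(t,s) := (|t|^{q1} + |s|^{q2})^{-1}. -/

import Mathlib

open MeasureTheory Real Set
open scoped ENNReal

lemma aux_lint (α R : ℝ) (h1 : α < 1) (hR : 0 < R) :
    ∫⁻ t : ℝ in Icc (-R) R, ENNReal.ofReal (|t| ^ (-α)) < ⊤ := by
  have hmeas : Measurable fun t : ℝ => ENNReal.ofReal (|t| ^ (-α)) := by fun_prop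
  have hpos : IntegrableOn (fun t : ℝ => |t| ^ (-α)) (Icc 0 R) := by
    have h1' : IntegrableOn (fun t : ℝ => t ^ (-α)) (Ioo 0 R) :=
      (intervalIntegral.integrableOn_Ioo_rpow_iff hR).2 (by linarith)
    have h2 : IntegrableOn (fun t : ℝ => |t| ^ (-α)) (Ioo 0 R) :=
      h1'.congr_fun (fun x hx => by rw [abs_of_pos hx.1]) measurableSet_Ioo
    exact h2.congr_set_ae MeasureTheory.Ioo_ae_eq_Icc.symm
  have key2 : ∫⁻ t in Icc 0 R, ENNReal.ofReal (|t| ^ (-α)) < ⊤ :=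
    hpos.lintegral_lt_top
  have hneg : ∫⁻ t in Icc (-R) 0, ENNReal.ofReal (|t| ^ (-α))
      = ∫⁻ t in Icc 0 R, ENNReal.ofReal (|t| ^ (-α)) := by
    conv_lhs => rw [← Measure.map_neg_eq_self (volume : Measure ℝ)]
    rw [setLIntegral_map measurableSet_Icc hmeas measurable_neg]
    simp only [abs_neg, neg_preimage, neg_Icc, neg_neg, neg_zero]
  have hsplit : Icc (-R) R = Icc (-R) 0 ∪ Icc 0 R :=
    (Icc_union_Icc_eq_Icc (by linarith) hR.le).symm
  rw [hsplit]
  refine lt_of_le_of_lt (lintegral_union_le _ _ _) ?_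
  rw [hneg]
  exact ENNReal.add_lt_top.2 ⟨key2, key2⟩

noncomputable def rho (q1 q2 t s : ℝ) : ℝ := (|t| ^ q1 + |s| ^ q2)⁻¹

theorem stmt_0 (q1 q2 h δ : ℝ) (hq1 : 0 < q1) (hq2 : 0 < q2)
    (hh : 0 < h) (hδ : 0 < δ) (hQ : h < 1 / q1 + 1 / q2) :
    ∫⁻ p : ℝ × ℝ in {p : ℝ × ℝ | δ < rho q1 q2 p.1 p.2},
      ENNReal.ofReal (rho q1 q2 p.1 p.2 ^ h) < ⊤ := by
  have hQ0 : 0 < 1 / q1 + 1 / q2 := by positivity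
  set Q : ℝ := 1 / q1 + 1 / q2 with hQdef
  set a : ℝ := (1 / q1) / Q with hadef
  set b : ℝ := (1 / q2) / Q with hbdef
  have ha : 0 < a := by positivity
  have hb : 0 < b := by positivity
  have hab : a + b = 1 := by rw [hadef, hbdef, hQdef]; field_simp
  set α : ℝ := h / Q with hαdef
  have hα0 : 0 < α := by positivity
  have hα1 : α < 1 := (div_lt_one hQ0).2 hQ
  set T : ℝ := δ⁻¹ ^ (1 / q1) with hTdef
  set S : ℝ := δ⁻¹ ^ (1 / q2) with hSdef
  have hT0 : 0 < T := rpow_pos_of_pos (by positivity) _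
  have hS0 : 0 < S := rpow_pos_of_pos (by positivity) _
  set g1 : ℝ → ℝ≥0∞ := (Icc (-T) T).indicator (fun t => ENNReal.ofReal (|t| ^ (-α))) with hg1
  set g2 : ℝ → ℝ≥0∞ := (Icc (-S) S).indicator (fun s => ENNReal.ofReal (|s| ^ (-α))) with hg2
  have hg1m : Measurable g1 := Measurable.indicator (by fun_prop) measurableSet_Icc
  have hg2m : Measurable g2 := Measurable.indicator (by fun_prop) measurableSet_Icc
  have hrhom : Measurable fun p : ℝ × ℝ => rho q1 q2 p.1 p.2 := by
    unfold rho; fun_prop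
  have hSm : MeasurableSet {p : ℝ × ℝ | δ < rho q1 q2 p.1 p.2} :=
    measurableSet_lt measurable_const hrhom
  have hbound : ∀ p : ℝ × ℝ, p.1 ≠ 0 → p.2 ≠ 0 →
      {p : ℝ × ℝ | δ < rho q1 q2 p.1 p.2}.indicator
        (fun p => ENNReal.ofReal (rho q1 q2 p.1 p.2 ^ h)) p ≤ g1 p.1 * g2 p.2 := by
    rintro ⟨t, s⟩ ht hs
    by_cases hp : (t, s) ∈ {p : ℝ × ℝ | δ < rho q1 q2 p.1 p.2}
    · rw [indicator_of_mem hp]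
      simp only [Set.mem_setOf_eq] at hp
      set x := |t| ^ q1 with hx
      set y := |s| ^ q2 with hy
      have hx0 : 0 < x := rpow_pos_of_pos (abs_pos.2 ht) _
      have hy0 : 0 < y := rpow_pos_of_pos (abs_pos.2 hs) _
      have hrho_eq : rho q1 q2 t s = (x + y)⁻¹ := by rw [hx, hy]; rfl
      have hxy : x + y < δ⁻¹ := by
        have h1 : δ < (x + y)⁻¹ := hrho_eq ▸ hp
        have h2 := inv_strictAnti₀ hδ h1
        simpa using h2
      have htT : t ∈ Icc (-T) T := by
        have h1 : x ≤ δ⁻¹ := by linarith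
        have h2 : (|t| ^ q1) ^ (1 / q1) ≤ T := Real.rpow_le_rpow hx0.le (hx ▸ h1) (by positivity)
        have h3 : (|t| ^ q1) ^ (1 / q1) = |t| := by
          rw [← Real.rpow_mul (abs_nonneg t), mul_one_div, div_self hq1.ne', Real.rpow_one]
        exact abs_le.1 (h3 ▸ h2)
      have hsS : s ∈ Icc (-S) S := by
        have h1 : y ≤ δ⁻¹ := by linarith
        have h2 : (|s| ^ q2) ^ (1 / q2) ≤ S := Real.rpow_le_rpow hy0.le (hy ▸ h1) (by positivity)
        have h3 : (|s| ^ q2) ^ (1 / q2) = |s| := by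
          rw [← Real.rpow_mul (abs_nonneg s), mul_one_div, div_self hq2.ne', Real.rpow_one]
        exact abs_le.1 (h3 ▸ h2)
      rw [hg1, hg2]
      simp only [indicator_of_mem htT, indicator_of_mem hsS]
      rw [← ENNReal.ofReal_mul (Real.rpow_nonneg (abs_nonneg t) _)]
      apply ENNReal.ofReal_le_ofReal
      have hgm0 : 0 < x ^ a * y ^ b :=
        mul_pos (rpow_pos_of_pos hx0 _) (rpow_pos_of_pos hy0 _)
      have hgm : x ^ a * y ^ b ≤ x + y := by
        have h1 := Real.geom_mean_le_arith_mean2_weighted ha.le hb.le hx0.le hy0.le hab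
        nlinarith [ha.le, hb.le, hx0.le, hy0.le, hab]
      have hinv : (x + y)⁻¹ ≤ (x ^ a * y ^ b)⁻¹ := inv_anti₀ hgm0 hgm
      have hr : ((x + y)⁻¹) ^ h ≤ ((x ^ a * y ^ b)⁻¹) ^ h :=
        Real.rpow_le_rpow (by positivity) hinv hh.le
      have e : ((x ^ a * y ^ b)⁻¹) ^ h = |t| ^ (-α) * |s| ^ (-α) := by
        rw [Real.inv_rpow hgm0.le, ← Real.rpow_neg hgm0.le,
          Real.mul_rpow (Real.rpow_nonneg hx0.le a) (Real.rpow_nonneg hy0.le b)]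
        congr 1
        · rw [hx, ← Real.rpow_mul (abs_nonneg t), ← Real.rpow_mul (abs_nonneg t)]
          congr 1
          rw [hadef, hαdef]
          field_simp
        · rw [hy, ← Real.rpow_mul (abs_nonneg s), ← Real.rpow_mul (abs_nonneg s)]
          congr 1
          rw [hbdef, hαdef]
          field_simp
      rw [hrho_eq]
      exact hr.trans e.le
    · rw [indicator_of_notMem hp]
      exact zero_le
  calc ∫⁻ p : ℝ × ℝ in {p : ℝ × ℝ | δ < rho q1 q2 p.1 p.2},
        ENNReal.ofReal (rho q1 q2 p.1 p.2 ^ h)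
      = ∫⁻ p : ℝ × ℝ, {p : ℝ × ℝ | δ < rho q1 q2 p.1 p.2}.indicator
          (fun p => ENNReal.ofReal (rho q1 q2 p.1 p.2 ^ h)) p := by
        rw [lintegral_indicator hSm]
    _ ≤ ∫⁻ p : ℝ × ℝ, g1 p.1 * g2 p.2 := by
        apply lintegral_mono_ae
        have hN1 : volume {p : ℝ × ℝ | p.1 = 0} = 0 := by
          have he : {p : ℝ × ℝ | p.1 = 0} = ({0} : Set ℝ) ×ˢ (univ : Set ℝ) := by
            ext p
            simp only [Set.mem_setOf_eq, Set.mem_prod, mem_singleton_iff, mem_univ, and_true, true_and]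
          rw [he, Measure.volume_eq_prod, Measure.prod_prod, Real.volume_singleton, zero_mul]
        have hN2 : volume {p : ℝ × ℝ | p.2 = 0} = 0 := by
          have he : {p : ℝ × ℝ | p.2 = 0} = (univ : Set ℝ) ×ˢ ({0} : Set ℝ) := by
            ext p
            simp only [Set.mem_setOf_eq, Set.mem_prod, mem_singleton_iff, mem_univ, and_true, true_and]
          rw [he, Measure.volume_eq_prod, Measure.prod_prod, Real.volume_singleton, mul_zero]
        have hN : volume ({p : ℝ × ℝ | p.1 = 0} ∪ {p : ℝ × ℝ | p.2 = 0}) = 0 :=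
          measure_union_null hN1 hN2
        filter_upwards [measure_eq_zero_iff_ae_notMem.1 hN] with p hp
        simp only [mem_union, Set.mem_setOf_eq, not_or] at hp
        exact hbound p hp.1 hp.2
    _ = (∫⁻ t, g1 t) * ∫⁻ s, g2 s := by
        rw [Measure.volume_eq_prod]
        exact lintegral_prod_mul hg1m.aemeasurable hg2m.aemeasurable
    _ < ⊤ := by
        apply ENNReal.mul_lt_top
        · rw [hg1, lintegral_indicator measurableSet_Icc]
          exact aux_lint α T hα1 hT0
        · rw [hg2, lintegral_indicator measurableSet_Icc]
          exact aux_lint α S hα1 hS0
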